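/- Let ξ ≥ 0, C > 0, δ > 0, and let c : ℤ → ℂ satisfy c_{−k} = conj(c_k) and |c_k| ≤ C·e^{−δ·|k|} for all k ∈ ℤ. For x ≥ 0 set ρ̃(x) = Σ_{k∈ℤ} c_k·ρ_{ξ,k}(x). Suppose ρ̃(x) is a positive real number for every x ≥ 0. Then for every x ∈ ℝ the sum Σ_{k∈ℤ} √(ξ+ik)·c_k·e^{ikx} (principal branch of the complex square root) is a nonnegative real number. Moreover, if ξ = 0, then c_k = 0 for every k ≠ 0. -/

import Mathlib

open MeasureTheory intervalIntegral Complex Filter Topology Set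

/-- `ρ_{ξ,k}(x) = (2/π)(2 w e^{wx} √x ∫₀^{√x} e^{-w u²} du + 1)` with `w = ξ + i k`. -/
noncomputable def rho (ξ : ℝ) (k : ℤ) (x : ℝ) : ℂ :=
  (2 / (Real.pi : ℂ)) *
    (2 * ((ξ : ℂ) + (k : ℂ) * Complex.I) *
        Complex.exp (((ξ : ℂ) + (k : ℂ) * Complex.I) * (x : ℂ)) * (Real.sqrt x : ℂ) *
        (∫ u in (0:ℝ)..Real.sqrt x,
          Complex.exp (-(((ξ : ℂ) + (k : ℂ) * Complex.I)) * (u : ℂ) ^ 2)) + 1)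




noncomputable def Jv (w : ℂ) : ℂ := (Real.sqrt Real.pi : ℂ) / (2 * w ^ ((1:ℂ)/2))

lemma arg_ne_pi {w : ℂ} (hre : 0 ≤ w.re) : w.arg ≠ Real.pi := by
  intro h
  rw [Complex.arg_eq_pi_iff] at h
  linarith [h.1]

lemma half_ne_zero' : ((1:ℂ)/2) ≠ 0 := by norm_num

lemma sqrt_ne_zero' {w : ℂ} (hw : w ≠ 0) : w ^ ((1:ℂ)/2) ≠ 0 := by
  simp [Complex.cpow_eq_zero_iff, hw]

lemma sqrt_mul_self' {w : ℂ} (hw : w ≠ 0) : w ^ ((1:ℂ)/2) * w ^ ((1:ℂ)/2) = w := by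
  rw [← Complex.cpow_add _ _ hw]
  norm_num

lemma abs_sqrt' (w : ℂ) : ‖w ^ ((1:ℂ)/2)‖ = Real.sqrt (‖w‖) := by
  have : ((1:ℂ)/2) = ((1/2 : ℝ) : ℂ) := by norm_num
  rw [this, Complex.norm_cpow_real, Real.sqrt_eq_rpow]

lemma Jval {w : ℂ} (hre : 0 < w.re) :
    ((Real.pi : ℂ) / w) ^ ((1:ℂ)/2) / 2 = Jv w := by
  have hw : w ≠ 0 := by intro h; rw [h] at hre; simp at hre
  have harg : w.arg ≠ Real.pi := arg_ne_pi hre.le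
  have h2 : ((Real.pi : ℂ) * w⁻¹) ^ ((1:ℂ)/2)
      = ((Real.pi : ℂ)) ^ ((1:ℂ)/2) * (w⁻¹) ^ ((1:ℂ)/2) := by
    rw [Complex.cpow_def_of_ne_zero (mul_ne_zero (by exact_mod_cast Real.pi_ne_zero) (inv_ne_zero hw)),
      Complex.cpow_def_of_ne_zero (by exact_mod_cast Real.pi_ne_zero),
      Complex.cpow_def_of_ne_zero (inv_ne_zero hw),
      Complex.log_ofReal_mul Real.pi_pos (inv_ne_zero hw), ← Complex.exp_add,
      Complex.ofReal_log Real.pi_pos.le, ← add_mul]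
  have h3 : (w⁻¹) ^ ((1:ℂ)/2) = (w ^ ((1:ℂ)/2))⁻¹ := Complex.inv_cpow _ _ harg
  have h4 : ((Real.pi : ℂ)) ^ ((1:ℂ)/2) = ((Real.sqrt Real.pi : ℝ) : ℂ) := by
    rw [Real.sqrt_eq_rpow, Complex.ofReal_cpow Real.pi_pos.le]
    norm_num
  rw [show ((Real.pi:ℂ)/w) = (Real.pi:ℂ) * w⁻¹ from div_eq_mul_inv _ _, h2, h3, h4, Jv]
  have h5 := sqrt_ne_zero' hw
  field_simp

lemma gauss_cont (w : ℂ) : Continuous fun u : ℝ => Complex.exp (-w * (u:ℂ)^2) := by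
  fun_prop

lemma gauss_norm {w : ℂ} (hre : 0 ≤ w.re) (u : ℝ) :
    ‖Complex.exp (-w * (u:ℂ)^2)‖ ≤ 1 := by
  rw [Complex.norm_exp]
  have : (-w * (u:ℂ)^2).re = -w.re * u^2 := by
    simp [Complex.mul_re, ← Complex.ofReal_pow]
  rw [this]
  have : -w.re * u^2 ≤ 0 := by nlinarith [sq_nonneg u]
  calc Real.exp (-w.re * u^2) ≤ Real.exp 0 := Real.exp_le_exp.2 this
    _ = 1 := Real.exp_zero

lemma gauss_tendsto {w : ℂ} (hre : 0 < w.re) :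
    Tendsto (fun T => ∫ u in (0:ℝ)..T, Complex.exp (-w * (u:ℂ)^2)) atTop (𝓝 (Jv w)) := by
  have h := intervalIntegral_tendsto_integral_Ioi 0
    (integrable_cexp_neg_mul_sq hre).integrableOn tendsto_id
  rw [integral_gaussian_complex_Ioi hre] at h
  have : ((Real.pi:ℂ)/w) ^ ((1:ℂ)/2) / 2 = Jv w := Jval hre
  rw [show ((1:ℂ)/2) = ((1/2 : ℂ)) from rfl] at this
  rw [this] at h
  exact h

lemma tail_bound {w : ℂ} (hre : 0 ≤ w.re) (hw : w ≠ 0) {a b : ℝ} (ha : 0 < a) (hab : a ≤ b) :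
    ‖∫ u in a..b, Complex.exp (-w * (u:ℂ)^2)‖ ≤ 2 / (‖w‖ * a) := by
  have hb0 : 0 < b := lt_of_lt_of_le ha hab
  have hWpos : 0 < ‖w‖ := norm_pos_iff.mpr hw
  set U : ℝ → ℂ := fun x => -(2*w)⁻¹ * (x:ℂ)⁻¹ with hU
  set U' : ℝ → ℂ := fun x => (2*w)⁻¹ * ((x:ℂ)^2)⁻¹ with hU'
  set V : ℝ → ℂ := fun x => Complex.exp (-w * (x:ℂ)^2) with hV
  set V' : ℝ → ℂ := fun x => Complex.exp (-w * (x:ℂ)^2) * (-w * (2*(x:ℂ))) with hV'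
  have hmem : ∀ x ∈ Set.uIcc a b, (0:ℝ) < x := by
    intro x hx
    rw [Set.uIcc_of_le hab] at hx
    linarith [hx.1]
  have hdU : ∀ x ∈ Set.uIcc a b, HasDerivAt U (U' x) x := by
    intro x hx
    have hx0 : (x:ℂ) ≠ 0 := by
      exact_mod_cast (hmem x hx).ne'
    have h1 : HasDerivAt (fun z : ℂ => -(2*w)⁻¹ * z⁻¹) (-(2*w)⁻¹ * (-((x:ℂ)^2)⁻¹)) (x:ℂ) :=
      (hasDerivAt_inv hx0).const_mul _
    have h2 := h1.comp_ofReal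
    convert h2 using 1
    simp [hU']
  have hdV : ∀ x ∈ Set.uIcc a b, HasDerivAt V (V' x) x := by
    intro x _
    have h1 : HasDerivAt (fun z : ℂ => -w * z^2) (-w * (2*(x:ℂ))) (x:ℂ) := by
      simpa [mul_comm] using ((hasDerivAt_pow 2 ((x:ℂ))).const_mul (-w))
    exact (h1.cexp).comp_ofReal
  have hcontU' : ContinuousOn U' (Set.uIcc a b) := by
    apply ContinuousOn.mul continuousOn_const
    apply ContinuousOn.inv₀
    · fun_prop
    · intro x hx
      exact pow_ne_zero _ (by exact_mod_cast (hmem x hx).ne')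
  have hiU' : IntervalIntegrable U' volume a b := hcontU'.intervalIntegrable
  have hcV' : Continuous V' := by rw [hV']; fun_prop
  have hiV' : IntervalIntegrable V' volume a b := hcV'.intervalIntegrable a b
  have hIBP := intervalIntegral.integral_mul_deriv_eq_deriv_mul hdU hdV hiU' hiV'
  have heq : Set.EqOn (fun u : ℝ => Complex.exp (-w * (u:ℂ)^2)) (fun x => U x * V' x)
      (Set.uIcc a b) := by
    intro x hx
    have hx0 : (x:ℂ) ≠ 0 := by exact_mod_cast (hmem x hx).ne'
    simp only [hU, hV']
    field_simp
  have h0 : ∫ u in a..b, Complex.exp (-w * (u:ℂ)^2) = ∫ x in a..b, U x * V' x :=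
    intervalIntegral.integral_congr heq
  -- bounds
  have hUnorm : ∀ x : ℝ, 0 < x → ‖U x‖ = 1/(2*‖w‖*x) := by
    intro x hx
    simp only [hU, norm_mul, norm_neg, norm_inv, Complex.norm_real, Real.norm_eq_abs,
      Complex.norm_two]
    rw [abs_of_pos hx]
    field_simp
  have hUbound : ∀ x : ℝ, a ≤ x → ‖U x‖ ≤ 1/(2*‖w‖*a) := by
    intro x hx
    rw [hUnorm x (lt_of_lt_of_le ha hx)]
    apply one_div_le_one_div_of_le (by positivity)
    nlinarith
  have hVbound : ∀ x : ℝ, ‖V x‖ ≤ 1 := fun x => gauss_norm hre x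
  have hterm : ∀ x : ℝ, a ≤ x → ‖U x * V x‖ ≤ 1/(2*‖w‖*a) := by
    intro x hx
    rw [norm_mul]
    calc ‖U x‖ * ‖V x‖ ≤ (1/(2*‖w‖*a)) * 1 :=
      mul_le_mul (hUbound x hx) (hVbound x) (norm_nonneg _) (by positivity)
    _ = 1/(2*‖w‖*a) := by ring
  -- bound the remaining integral
  have hIz : ∫ x in a..b, ((2*‖w‖)⁻¹ * (x^2)⁻¹) = (2*‖w‖)⁻¹ * (a⁻¹ - b⁻¹) := by
    rw [intervalIntegral.integral_const_mul]
    congr 1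
    have hz : ∫ x in a..b, (x:ℝ)^(-2:ℤ) = (b ^ ((-2:ℤ) + 1) - a ^ ((-2:ℤ) + 1)) / (((-2:ℤ):ℝ) + 1) := by
      apply integral_zpow
      refine Or.inr ⟨by norm_num, ?_⟩
      rw [Set.uIcc_of_le hab]
      intro h
      exact absurd h.1 (by linarith)
    have hz2 : (fun x : ℝ => (x^2)⁻¹) = (fun x : ℝ => (x:ℝ)^(-2:ℤ)) := by
      funext x; rw [zpow_neg, zpow_two, sq]
    rw [hz2, hz]
    norm_num
    ring
  have hnorm3 : ‖∫ x in a..b, U' x * V x‖ ≤ (2*‖w‖)⁻¹ * (a⁻¹ - b⁻¹) := by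
    have hle : ∀ᵐ t ∂(volume.restrict (Set.uIoc a b)),
        ‖U' t * V t‖ ≤ (2*‖w‖)⁻¹ * (t^2)⁻¹ := by
      refine (MeasureTheory.ae_restrict_mem measurableSet_uIoc).mono ?_
      intro t ht
      have ht0 : 0 < t := by
        rw [Set.uIoc_of_le hab] at ht
        linarith [ht.1]
      rw [norm_mul]
      have h1 : ‖U' t‖ = (2*‖w‖)⁻¹ * (t^2)⁻¹ := by
        simp only [hU', norm_mul, norm_inv, norm_pow,
          Complex.norm_real, Real.norm_eq_abs, Complex.norm_two]
        rw [abs_of_pos ht0]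
      calc ‖U' t‖ * ‖V t‖ ≤ ((2*‖w‖)⁻¹ * (t^2)⁻¹) * 1 := by
            rw [h1]
            exact mul_le_mul_of_nonneg_left (hVbound t) (by positivity)
        _ = (2*‖w‖)⁻¹ * (t^2)⁻¹ := by ring
    have hgint : IntervalIntegrable (fun t : ℝ => (2*‖w‖)⁻¹ * (t^2)⁻¹) volume a b := by
      apply ContinuousOn.intervalIntegrable
      apply ContinuousOn.mul continuousOn_const
      apply ContinuousOn.inv₀ (by fun_prop)
      intro x hx
      exact pow_ne_zero _ (hmem x hx).ne'
    have := (intervalIntegral.norm_integral_le_of_norm_le hab (by rw [Set.uIoc_of_le hab] at hle; exact (ae_restrict_iff' measurableSet_Ioc).mp hle) hgint).trans (le_abs_self _)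
    rw [hIz] at this
    refine this.trans ?_
    have hib : b⁻¹ ≤ a⁻¹ := one_div b ▸ one_div a ▸ one_div_le_one_div_of_le ha hab
    exact le_of_eq (_root_.abs_of_nonneg (mul_nonneg (by positivity) (sub_nonneg.mpr hib)))
  -- combine
  rw [h0, hIBP]
  have final : ‖U b * V b - U a * V a - ∫ x in a..b, U' x * V x‖ ≤
      1/(2*‖w‖*a) + 1/(2*‖w‖*a) + (2*‖w‖)⁻¹ * (a⁻¹ - b⁻¹) := by
    calc ‖U b * V b - U a * V a - ∫ x in a..b, U' x * V x‖
        ≤ ‖U b * V b - U a * V a‖ + ‖∫ x in a..b, U' x * V x‖ := norm_sub_le _ _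
      _ ≤ (‖U b * V b‖ + ‖U a * V a‖) + ‖∫ x in a..b, U' x * V x‖ := by
          gcongr; exact norm_sub_le _ _
      _ ≤ (1/(2*‖w‖*a) + 1/(2*‖w‖*a)) + (2*‖w‖)⁻¹ * (a⁻¹ - b⁻¹) := by
          gcongr
          · exact hterm b hab
          · exact hterm a le_rfl
      _ = 1/(2*‖w‖*a) + 1/(2*‖w‖*a) + (2*‖w‖)⁻¹ * (a⁻¹ - b⁻¹) := by
          ring
  refine final.trans ?_
  have hib : b⁻¹ ≤ a⁻¹ := one_div b ▸ one_div a ▸ one_div_le_one_div_of_le ha hab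
  have hWa : (0:ℝ) < ‖w‖ * a := by positivity
  have hbi : (0:ℝ) ≤ b⁻¹ := by positivity
  have e1 : (2*‖w‖)⁻¹ * (a⁻¹ - b⁻¹) ≤ (2*‖w‖)⁻¹ * a⁻¹ := by
    gcongr
    · linarith
  have e2 : (2*‖w‖)⁻¹ * a⁻¹ = 1/(2*‖w‖*a) := by
    field_simp
  have e3 : (3:ℝ)/(2*‖w‖*a) ≤ 2/(‖w‖*a) := by
    rw [div_le_div_iff₀ (by positivity) (by positivity)]
    nlinarith [hWa]
  have e4 : (3:ℝ)/(2*‖w‖*a) = 1/(2*‖w‖*a) + 1/(2*‖w‖*a) + 1/(2*‖w‖*a) := by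
    ring
  linarith

lemma key_pos {w : ℂ} (hre : 0 < w.re) {T : ℝ} (hT : 0 < T) :
    ‖(∫ u in (0:ℝ)..T, Complex.exp (-w * (u:ℂ)^2)) - Jv w‖ ≤ 2 / (‖w‖ * T) := by
  have hw : w ≠ 0 := by intro h; rw [h] at hre; simp at hre
  have hInt : ∀ s t : ℝ, IntervalIntegrable (fun u : ℝ => Complex.exp (-w * (u:ℂ)^2)) volume s t :=
    fun s t => (gauss_cont w).intervalIntegrable s t
  have hsub : ∀ b : ℝ, (∫ u in (0:ℝ)..b, Complex.exp (-w * (u:ℂ)^2))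
      - (∫ u in (0:ℝ)..T, Complex.exp (-w * (u:ℂ)^2))
      = ∫ u in T..b, Complex.exp (-w * (u:ℂ)^2) := fun b =>
    intervalIntegral.integral_interval_sub_left (hInt 0 b) (hInt 0 T)
  have hlim : Tendsto (fun b => ∫ u in T..b, Complex.exp (-w * (u:ℂ)^2)) atTop
      (𝓝 (Jv w - ∫ u in (0:ℝ)..T, Complex.exp (-w * (u:ℂ)^2))) := by
    have := (gauss_tendsto hre).sub_const (∫ u in (0:ℝ)..T, Complex.exp (-w * (u:ℂ)^2))
    refine this.congr (fun b => hsub b)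
  have hnorm : Tendsto (fun b => ‖∫ u in T..b, Complex.exp (-w * (u:ℂ)^2)‖) atTop
      (𝓝 ‖Jv w - ∫ u in (0:ℝ)..T, Complex.exp (-w * (u:ℂ)^2)‖) := hlim.norm
  have hle : ‖Jv w - ∫ u in (0:ℝ)..T, Complex.exp (-w * (u:ℂ)^2)‖ ≤ 2 / (‖w‖ * T) := by
    refine le_of_tendsto hnorm ?_
    filter_upwards [eventually_ge_atTop T] with b hb
    exact tail_bound hre.le hw hT hb
  rw [norm_sub_rev] at hle
  exact hle

lemma abs_le_abs_add_re {w : ℂ} (hre : w.re = 0) (ε : ℝ) (hε : 0 ≤ ε) :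
    ‖w‖ ≤ ‖w + ε‖ := by
  have h1 : ‖w‖ = |w.im| := by
    rw [Complex.norm_eq_sqrt_sq_add_sq, hre]
    simp [Real.sqrt_sq_eq_abs]
  have h2 : (w + ε).im = w.im := by simp
  calc ‖w‖ = |(w + ε).im| := by rw [h1, h2]
    _ ≤ ‖w + ε‖ := Complex.abs_im_le_norm _

lemma key {w : ℂ} (hre : 0 ≤ w.re) (hw : w ≠ 0) {T : ℝ} (hT : 0 < T) :
    ‖(∫ u in (0:ℝ)..T, Complex.exp (-w * (u:ℂ)^2)) - Jv w‖ ≤ 2 / (‖w‖ * T) := by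
  rcases lt_or_eq_of_le hre with hre' | hre'
  · exact key_pos hre' hT
  · have hre0 : w.re = 0 := hre'.symm
    have him : w.im ≠ 0 := fun h => hw (Complex.ext (by simpa using hre0) (by simpa using h))
    have hWpos : 0 < ‖w‖ := norm_pos_iff.mpr hw
    have hεkey : ∀ ε : ℝ, 0 < ε →
        ‖(∫ u in (0:ℝ)..T, Complex.exp (-w * (u:ℂ)^2)) - Jv w‖ ≤
          ε * T^3/3 + 2/(‖w‖ * T) + ‖Jv (w + ε) - Jv w‖ := by
      intro ε hε
      have hwεpos : 0 < (w + ε).re := by simp [hre0, hε]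
      have h2 : ‖(∫ u in (0:ℝ)..T, Complex.exp (-(w+ε) * (u:ℂ)^2)) - Jv (w+ε)‖
          ≤ 2/(‖w+ε‖ * T) := key_pos hwεpos hT
      have h2' : (2:ℝ)/(‖w+ε‖ * T) ≤ 2/(‖w‖ * T) := by
        gcongr <;> first
          | positivity
          | exact mul_le_mul_of_nonneg_right (abs_le_abs_add_re hre0 ε hε.le) hT.le
          | exact abs_le_abs_add_re hre0 ε hε.le
      have h1 : ‖(∫ u in (0:ℝ)..T, Complex.exp (-w * (u:ℂ)^2))
          - (∫ u in (0:ℝ)..T, Complex.exp (-(w+ε) * (u:ℂ)^2))‖ ≤ ε * T^3/3 := by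
        rw [← intervalIntegral.integral_sub ((gauss_cont w).intervalIntegrable 0 T)
          ((gauss_cont (w+ε)).intervalIntegrable 0 T)]
        have hb : ∀ᵐ (t : ℝ) ∂(volume.restrict (Set.uIoc (0:ℝ) T)),
            ‖Complex.exp (-w * (t:ℂ)^2) - Complex.exp (-(w+ε) * (t:ℂ)^2)‖ ≤ ε * t^2 := by
          refine MeasureTheory.ae_of_all _ (fun t => ?_)
          have hfac : Complex.exp (-(w+ε) * (t:ℂ)^2)
              = Complex.exp (-w * (t:ℂ)^2) * Complex.exp (((-(ε * t^2) : ℝ) : ℂ)) := by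
            rw [← Complex.exp_add]
            congr 1
            push_cast
            ring
          have hone : Complex.exp (-w * (t:ℂ)^2) - Complex.exp (-(w+ε) * (t:ℂ)^2)
              = Complex.exp (-w * (t:ℂ)^2) * (1 - Complex.exp (((-(ε * t^2) : ℝ) : ℂ))) := by
            rw [hfac]; ring
          rw [hone, norm_mul]
          have hb1 : ‖(1 : ℂ) - Complex.exp (((-(ε * t^2) : ℝ) : ℂ))‖ ≤ ε * t^2 := by
            rw [← Complex.ofReal_exp, ← Complex.ofReal_one, ← Complex.ofReal_sub,
              Complex.norm_real, Real.norm_eq_abs]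
            have he1 : Real.exp (-(ε * t^2)) ≤ 1 := by
              apply Real.exp_le_one_iff.mpr
              nlinarith [sq_nonneg t]
            have he2 : 1 - Real.exp (-(ε * t^2)) ≤ ε * t^2 := by
              have := Real.add_one_le_exp (-(ε * t^2))
              linarith
            rw [_root_.abs_of_nonneg (by linarith)]
            exact he2
          calc ‖Complex.exp (-w * (t:ℂ)^2)‖ * ‖(1:ℂ) - Complex.exp (((-(ε * t^2) : ℝ) : ℂ))‖
              ≤ 1 * (ε * t^2) :=
                mul_le_mul (gauss_norm hre t) hb1 (norm_nonneg _) zero_le_one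
            _ = ε * t^2 := one_mul _
        have hg : IntervalIntegrable (fun t : ℝ => ε * t^2) volume 0 T := by
          apply Continuous.intervalIntegrable
          fun_prop
        have := (intervalIntegral.norm_integral_le_of_norm_le hT.le (by rw [Set.uIoc_of_le hT.le] at hb; exact (ae_restrict_iff' measurableSet_Ioc).mp hb) hg).trans (le_abs_self _)
        refine this.trans ?_
        rw [intervalIntegral.integral_const_mul, integral_pow]
        have hTn : ε * (((T:ℝ) ^ (2+1) - 0 ^ (2+1)) / (((2:ℕ):ℝ)+1)) = ε * T^3/3 := by
          norm_num
          ring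
        rw [hTn, _root_.abs_of_nonneg
          (div_nonneg (mul_nonneg hε.le (pow_nonneg hT.le 3)) (by norm_num))]
      have hsplit : (∫ u in (0:ℝ)..T, Complex.exp (-w * (u:ℂ)^2)) - Jv w
          = ((∫ u in (0:ℝ)..T, Complex.exp (-w * (u:ℂ)^2))
              - (∫ u in (0:ℝ)..T, Complex.exp (-(w+ε) * (u:ℂ)^2)))
            + ((∫ u in (0:ℝ)..T, Complex.exp (-(w+ε) * (u:ℂ)^2)) - Jv (w+ε))
            + (Jv (w+ε) - Jv w) := by ring
      calc ‖(∫ u in (0:ℝ)..T, Complex.exp (-w * (u:ℂ)^2)) - Jv w‖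
          = ‖((∫ u in (0:ℝ)..T, Complex.exp (-w * (u:ℂ)^2))
              - (∫ u in (0:ℝ)..T, Complex.exp (-(w+ε) * (u:ℂ)^2)))
            + ((∫ u in (0:ℝ)..T, Complex.exp (-(w+ε) * (u:ℂ)^2)) - Jv (w+ε))
            + (Jv (w+ε) - Jv w)‖ := by rw [← hsplit]
        _ ≤ ‖((∫ u in (0:ℝ)..T, Complex.exp (-w * (u:ℂ)^2))
              - (∫ u in (0:ℝ)..T, Complex.exp (-(w+ε) * (u:ℂ)^2)))
            + ((∫ u in (0:ℝ)..T, Complex.exp (-(w+ε) * (u:ℂ)^2)) - Jv (w+ε))‖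
            + ‖Jv (w+ε) - Jv w‖ := norm_add_le _ _
        _ ≤ (‖(∫ u in (0:ℝ)..T, Complex.exp (-w * (u:ℂ)^2))
              - (∫ u in (0:ℝ)..T, Complex.exp (-(w+ε) * (u:ℂ)^2))‖
            + ‖(∫ u in (0:ℝ)..T, Complex.exp (-(w+ε) * (u:ℂ)^2)) - Jv (w+ε)‖)
            + ‖Jv (w+ε) - Jv w‖ := by gcongr; exact norm_add_le _ _
        _ ≤ (ε * T^3/3 + 2/(‖w‖ * T)) + ‖Jv (w+ε) - Jv w‖ := by
            gcongr
            exact h2.trans h2'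
        _ = ε * T^3/3 + 2/(‖w‖ * T) + ‖Jv (w+ε) - Jv w‖ := by ring
    -- limit as ε → 0⁺
    have hslit : w ∈ Complex.slitPlane := Complex.mem_slitPlane_iff.mpr (Or.inr him)
    have hc1 : ContinuousAt (fun z : ℂ => z ^ ((1:ℂ)/2)) w :=
      continuousAt_cpow_const hslit
    have hg0 : ContinuousAt (fun ε : ℝ => w + (ε : ℂ)) 0 := by fun_prop
    have h00 : w + ((0:ℝ):ℂ) = w := by simp
    have hcomp : ContinuousAt (fun ε : ℝ => (w + (ε:ℂ)) ^ ((1:ℂ)/2)) 0 := by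
      have hrw : (fun ε : ℝ => (w + (ε:ℂ)) ^ ((1:ℂ)/2))
          = (fun z : ℂ => z ^ ((1:ℂ)/2)) ∘ (fun ε : ℝ => w + (ε:ℂ)) := rfl
      rw [hrw]
      apply ContinuousAt.comp _ hg0
      rw [h00]
      exact hc1
    have hJcont : ContinuousAt (fun ε : ℝ => Jv (w + (ε:ℂ))) 0 := by
      apply ContinuousAt.div continuousAt_const (continuousAt_const.mul hcomp)
      show (2:ℂ) * (w + ((0:ℝ):ℂ)) ^ ((1:ℂ)/2) ≠ 0
      rw [h00]
      exact mul_ne_zero two_ne_zero (sqrt_ne_zero' hw)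
    have hcont : Tendsto (fun ε : ℝ => ε * T^3/3 + 2/(‖w‖ * T) + ‖Jv (w + ε) - Jv w‖)
        (𝓝[>] (0:ℝ)) (𝓝 ((0:ℝ) * T^3/3 + 2/(‖w‖ * T) + ‖Jv (w + ((0:ℝ):ℂ)) - Jv w‖)) := by
      apply Tendsto.mono_left _ nhdsWithin_le_nhds
      apply ContinuousAt.tendsto
      apply ContinuousAt.add (ContinuousAt.add (by fun_prop) continuousAt_const)
      exact (hJcont.sub continuousAt_const).norm
    have hev : ∀ᶠ (ε : ℝ) in 𝓝[>] (0:ℝ),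
        ‖(∫ u in (0:ℝ)..T, Complex.exp (-w * (u:ℂ)^2)) - Jv w‖ ≤
          ε * T^3/3 + 2/(‖w‖ * T) + ‖Jv (w + ε) - Jv w‖ :=
      eventually_mem_nhdsWithin.mono (fun ε hε => hεkey ε hε)
    have := ge_of_tendsto hcont hev
    rw [h00] at this
    simpa using this

lemma rho_err {ξ : ℝ} (hξ : 0 ≤ ξ) (k : ℤ) {x : ℝ} (hx : 1 ≤ x) :
    ‖rho ξ k x - (2/((Real.sqrt Real.pi : ℝ):ℂ)) * (((ξ:ℂ) + (k:ℂ)*Complex.I) ^ ((1:ℂ)/2))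
      * Complex.exp (((ξ:ℂ) + (k:ℂ)*Complex.I) * (x:ℂ)) * ((Real.sqrt x : ℝ):ℂ)‖
      ≤ 10/Real.pi * Real.exp (ξ*x) := by
  set w : ℂ := (ξ:ℂ) + (k:ℂ)*Complex.I with hwdef
  have hre : w.re = ξ := by simp [hwdef]
  have hx0 : (0:ℝ) < x := lt_of_lt_of_le one_pos hx
  have hT : 0 < Real.sqrt x := Real.sqrt_pos.mpr hx0
  have hexp1 : 1 ≤ Real.exp (ξ*x) := Real.one_le_exp (by positivity)
  have habsexp : ‖Complex.exp (w * (x:ℂ))‖ = Real.exp (ξ*x) := by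
    rw [Complex.norm_exp]
    congr 1
    simp [Complex.mul_re, hre]
  have hnorm2π : ‖(2/((Real.pi:ℝ):ℂ))‖ = 2/Real.pi := by
    rw [norm_div, Complex.norm_real, Real.norm_eq_abs, _root_.abs_of_pos Real.pi_pos]
    simp
  by_cases hw : w = 0
  · have hξ0 : ξ = 0 := by rw [← hre, hw]; simp
    unfold rho
    rw [← hwdef, hw]
    simp only [mul_zero, zero_mul, zero_add, mul_one, zero_cpow (by norm_num : ((1:ℂ)/2) ≠ 0)]
    rw [sub_zero, hnorm2π, hξ0, zero_mul, Real.exp_zero, mul_one]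
    have h2 : (2:ℝ)/Real.pi ≤ 10/Real.pi := by
      gcongr
      norm_num
    exact h2
  · have hwre : 0 ≤ w.re := by rw [hre]; exact hξ
    have hkey := key hwre hw hT
    have hWpos : 0 < ‖w‖ := norm_pos_iff.mpr hw
    set E := Complex.exp (w * (x:ℂ)) with hE
    set T := Real.sqrt x with hTdef
    set I0 := ∫ u in (0:ℝ)..T, Complex.exp (-w * (u:ℂ)^2) with hI0
    have hs0 : ((Real.sqrt Real.pi:ℝ):ℂ) ≠ 0 := by
      simp [Real.sqrt_ne_zero'.mpr Real.pi_pos]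
    have hπ0 : ((Real.pi:ℝ):ℂ) ≠ 0 := by exact_mod_cast Real.pi_ne_zero
    have hsπ : ((Real.sqrt Real.pi:ℝ):ℂ) * ((Real.sqrt Real.pi:ℝ):ℂ) = ((Real.pi:ℝ):ℂ) := by
      rw [← Complex.ofReal_mul, Real.mul_self_sqrt Real.pi_pos.le]
    have h12 := sqrt_mul_self' hw
    have hmain : (2/((Real.sqrt Real.pi:ℝ):ℂ)) * (w ^ ((1:ℂ)/2)) * E * ((T:ℝ):ℂ)
        = (2/((Real.pi:ℝ):ℂ)) * (2*w*E*((T:ℝ):ℂ) * Jv w) := by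
      rw [Jv]
      have hhalf := sqrt_ne_zero' hw
      field_simp
      linear_combination (E*((T:ℝ):ℂ)*((Real.pi:ℝ):ℂ)) * h12 - (w*E*((T:ℝ):ℂ)) * hsπ
    have hdecomp : rho ξ k x
        - (2/((Real.sqrt Real.pi:ℝ):ℂ)) * (w ^ ((1:ℂ)/2)) * E * ((T:ℝ):ℂ)
        = (2/((Real.pi:ℝ):ℂ)) * (2*w*E*((T:ℝ):ℂ) * (I0 - Jv w)) + (2/((Real.pi:ℝ):ℂ)) := by
      unfold rho
      rw [← hwdef, ← hE, ← hTdef, ← hI0, hmain]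
      ring
    rw [hdecomp]
    have hD : ‖I0 - Jv w‖ ≤ 2/(‖w‖ * T) := hkey
    have h1 : ‖(2/((Real.pi:ℝ):ℂ)) * (2*w*E*((T:ℝ):ℂ) * (I0 - Jv w))‖
        ≤ (2/Real.pi) * (2*‖w‖*Real.exp (ξ*x)*T * (2/(‖w‖ * T))) := by
      rw [norm_mul, norm_mul]
      rw [hnorm2π]
      have he1 : ‖2*w*E*((T:ℝ):ℂ)‖ = 2*‖w‖*Real.exp (ξ*x)*T := by
        rw [norm_mul, norm_mul, norm_mul]
        rw [Complex.norm_real, Real.norm_eq_abs, _root_.abs_of_pos hT]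
        rw [hE, habsexp]
        norm_num
      rw [he1]
      gcongr
    have h2 : (2/Real.pi) * (2*‖w‖*Real.exp (ξ*x)*T * (2/(‖w‖ * T)))
        = 8/Real.pi * Real.exp (ξ*x) := by
      field_simp
      ring
    calc ‖(2/((Real.pi:ℝ):ℂ)) * (2*w*E*((T:ℝ):ℂ) * (I0 - Jv w)) + (2/((Real.pi:ℝ):ℂ))‖
        ≤ ‖(2/((Real.pi:ℝ):ℂ)) * (2*w*E*((T:ℝ):ℂ) * (I0 - Jv w))‖ + ‖(2/((Real.pi:ℝ):ℂ))‖ :=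
          norm_add_le _ _
      _ ≤ 8/Real.pi * Real.exp (ξ*x) + 2/Real.pi := by
          rw [hnorm2π]
          gcongr
          exact h1.trans (le_of_eq h2)
      _ ≤ 10/Real.pi * Real.exp (ξ*x) := by
          have hb1 : (2:ℝ)/Real.pi ≤ 2/Real.pi * Real.exp (ξ*x) := by
            nlinarith [Real.pi_pos, (div_pos (by norm_num : (0:ℝ) < 2) Real.pi_pos)]
          have hb2 : 8/Real.pi * Real.exp (ξ*x) + 2/Real.pi * Real.exp (ξ*x)
              = 10/Real.pi * Real.exp (ξ*x) := by ring
          linarith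

lemma summable_geom_aux (a : ℝ) {δ : ℝ} (hδ : 0 < δ) :
    Summable (fun k : ℤ => (a + |(k:ℝ)|) * Real.exp (-δ * |(k:ℝ)|)) := by
  have hr0 : (0:ℝ) ≤ Real.exp (-δ) := (Real.exp_pos _).le
  have hr1 : Real.exp (-δ) < 1 := by
    rw [Real.exp_lt_one_iff]
    linarith
  have hnat : Summable (fun n : ℕ => (a + (n:ℝ)) * Real.exp (-δ) ^ n) := by
    have h1 : Summable (fun n : ℕ => a * Real.exp (-δ) ^ n) :=
      (summable_geometric_of_lt_one hr0 hr1).mul_left a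
    have h2 : Summable (fun n : ℕ => (n:ℝ) * Real.exp (-δ) ^ n) := by
      simpa using summable_pow_mul_geometric_of_norm_lt_one 1
        (r := Real.exp (-δ)) (by rwa [Real.norm_eq_abs, _root_.abs_of_nonneg hr0])
    exact (h1.add h2).congr (fun n => by ring)
  apply Summable.of_nat_of_neg
  · apply hnat.congr
    intro n
    have h1 : |(((n:ℤ)):ℝ)| = (n:ℝ) := by
      push_cast
      exact _root_.abs_of_nonneg (Nat.cast_nonneg n)
    rw [h1, show -δ * (n:ℝ) = (n:ℝ) * (-δ) from by ring, Real.exp_nat_mul]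
  · apply hnat.congr
    intro n
    have h1 : |(((-n:ℤ)):ℝ)| = (n:ℝ) := by
      push_cast
      rw [abs_neg]
      exact _root_.abs_of_nonneg (Nat.cast_nonneg n)
    rw [h1, show -δ * (n:ℝ) = (n:ℝ) * (-δ) from by ring, Real.exp_nat_mul]

/-- if `ρ̃(x) = Σ c_k ρ_{ξ,k}(x)` is a positive real for all `x ≥ 0`, then
`Σ √(ξ+ik) c_k e^{ikx}` is a nonnegative real for all `x`, and for `ξ = 0` all `c_k`
with `k ≠ 0` vanish. -/
theorem stmt16 (ξ : ℝ) (hξ : 0 ≤ ξ) (C δ : ℝ) (hC : 0 < C) (hδ : 0 < δ)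
    (c : ℤ → ℂ) (hconj : ∀ k : ℤ, c (-k) = starRingEnd ℂ (c k))
    (hdecay : ∀ k : ℤ, ‖c k‖ ≤ C * Real.exp (-δ * |(k : ℝ)|))
    (hpos : ∀ x : ℝ, 0 ≤ x →
      (∑' k : ℤ, c k * rho ξ k x).im = 0 ∧ 0 < (∑' k : ℤ, c k * rho ξ k x).re) :
    (∀ x : ℝ,
      (∑' k : ℤ, ((ξ : ℂ) + (k : ℂ) * Complex.I) ^ ((1:ℂ)/2) * c k *
        Complex.exp ((k : ℂ) * Complex.I * (x : ℂ))).im = 0 ∧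
      0 ≤ (∑' k : ℤ, ((ξ : ℂ) + (k : ℂ) * Complex.I) ^ ((1:ℂ)/2) * c k *
        Complex.exp ((k : ℂ) * Complex.I * (x : ℂ))).re) ∧
    (ξ = 0 → ∀ k : ℤ, k ≠ 0 → c k = 0) := by
  have hπ : (0:ℝ) < Real.pi := Real.pi_pos
  set w : ℤ → ℂ := fun k => (ξ:ℂ) + (k:ℂ)*Complex.I with hwdef
  have habsw : ∀ k : ℤ, ‖w k‖ ≤ ξ + |(k:ℝ)| := by
    intro k
    calc ‖w k‖ ≤ ‖(ξ:ℂ)‖ + ‖(k:ℂ)*Complex.I‖ :=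
          norm_add_le _ _
      _ = ξ + |(k:ℝ)| := by
          rw [norm_mul, Complex.norm_I, mul_one, Complex.norm_real, Real.norm_eq_abs, Complex.norm_intCast,
            _root_.abs_of_nonneg hξ]
  have hbnorm : ∀ k : ℤ, ‖w k ^ ((1:ℂ)/2) * c k‖
      ≤ ((1 + ξ) + |(k:ℝ)|) * (C * Real.exp (-δ * |(k:ℝ)|)) := by
    intro k
    rw [norm_mul, abs_sqrt']
    have h1 : Real.sqrt (‖w k‖) ≤ (1 + ξ) + |(k:ℝ)| := by
      have h2 : ‖w k‖ ≤ ((1 + ξ) + |(k:ℝ)|)^2 := by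
        nlinarith [habsw k, abs_nonneg ((k:ℝ)), hξ, norm_nonneg (w k)]
      calc Real.sqrt (‖w k‖) ≤ Real.sqrt (((1 + ξ) + |(k:ℝ)|)^2) :=
            Real.sqrt_le_sqrt h2
        _ = (1 + ξ) + |(k:ℝ)| := Real.sqrt_sq (by positivity)
    exact mul_le_mul h1 (hdecay k) (norm_nonneg _) (by positivity)
  have hsum_polyC : Summable (fun k : ℤ => ((1 + ξ) + |(k:ℝ)|) * (C * Real.exp (-δ * |(k:ℝ)|))) := by
    apply ((summable_geom_aux (1+ξ) hδ).mul_left C).congr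
    intro k
    ring
  have hsum_b : Summable (fun k : ℤ => ‖w k ^ ((1:ℂ)/2) * c k‖) :=
    Summable.of_nonneg_of_le (fun k => norm_nonneg _) hbnorm hsum_polyC
  have hsum_c : Summable (fun k : ℤ => ‖c k‖) := by
    apply Summable.of_nonneg_of_le (fun k => norm_nonneg _) (fun k => ?_) hsum_polyC
    calc ‖c k‖ ≤ C * Real.exp (-δ * |(k:ℝ)|) := hdecay k
      _ ≤ ((1 + ξ) + |(k:ℝ)|) * (C * Real.exp (-δ * |(k:ℝ)|)) := by
          nlinarith [mul_nonneg (add_nonneg hξ (abs_nonneg ((k:ℝ))))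
            (mul_pos hC (Real.exp_pos (-δ * |(k:ℝ)|))).le]
  set K := ∑' k : ℤ, ‖c k‖ with hK
  have hK0 : 0 ≤ K := tsum_nonneg (fun k => norm_nonneg _)
  set B := 5 / Real.sqrt Real.pi * K with hB
  have hB0 : 0 ≤ B := by positivity
  set S : ℝ → ℂ :=
    fun t => ∑' k : ℤ, w k ^ ((1:ℂ)/2) * c k * Complex.exp ((k:ℂ)*Complex.I*(t:ℂ)) with hSdef
  have hcterm : ∀ (k:ℤ) (t:ℝ), ‖w k ^ ((1:ℂ)/2) * c k * Complex.exp ((k:ℂ)*Complex.I*(t:ℂ))‖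
      = ‖w k ^ ((1:ℂ)/2) * c k‖ := by
    intro k t
    rw [norm_mul]
    have h1 : ‖Complex.exp ((k:ℂ)*Complex.I*(t:ℂ))‖ = 1 := by
      rw [Complex.norm_exp]
      have h2 : ((k:ℂ)*Complex.I*(t:ℂ)).re = 0 := by
        simp [Complex.mul_re, Complex.mul_im]
      rw [h2, Real.exp_zero]
    rw [h1, mul_one]
  have hsum_S : ∀ t : ℝ,
      Summable (fun k : ℤ => w k ^ ((1:ℂ)/2) * c k * Complex.exp ((k:ℂ)*Complex.I*(t:ℂ))) := by
    intro t
    apply Summable.of_norm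
    exact hsum_b.congr (fun k => (hcterm k t).symm)
  have hSper : ∀ (t : ℝ) (n : ℕ), S (t + 2*Real.pi*n) = S t := by
    intro t n
    apply tsum_congr
    intro k
    congr 1
    rw [show ((k:ℂ)*Complex.I*((t + 2*Real.pi*n : ℝ):ℂ))
        = (k:ℂ)*Complex.I*(t:ℂ) + ((k*(n:ℤ) : ℤ):ℂ) * (2*(Real.pi:ℂ)*Complex.I) from by
      push_cast
      ring]
    rw [Complex.exp_add, Complex.exp_int_mul_two_pi_mul_I, mul_one]
  -- core estimate
  have hmainS : ∀ t : ℝ, 1 ≤ t →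
      |(S t).im| ≤ B / Real.sqrt t ∧ -(B / Real.sqrt t) ≤ (S t).re := by
    intro t ht
    have ht0 : (0:ℝ) ≤ t := by linarith
    have hst : 0 < Real.sqrt t := Real.sqrt_pos.mpr (by linarith)
    set A : ℝ := Real.exp (ξ*t) * Real.sqrt t * (2/Real.sqrt Real.pi) with hA
    have hA0 : 0 < A := by positivity
    set main : ℤ → ℂ := fun k => (2/((Real.sqrt Real.pi:ℝ):ℂ)) * (w k ^ ((1:ℂ)/2))
        * Complex.exp (w k * (t:ℂ)) * ((Real.sqrt t:ℝ):ℂ) with hmaindef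
    have herr : ∀ k, ‖c k * (rho ξ k t - main k)‖
        ≤ ‖c k‖ * (10/Real.pi * Real.exp (ξ*t)) := by
      intro k
      rw [norm_mul]
      exact mul_le_mul_of_nonneg_left (rho_err hξ k ht) (norm_nonneg _)
    have hsum_errn : Summable (fun k => ‖c k * (rho ξ k t - main k)‖) :=
      Summable.of_nonneg_of_le (fun k => norm_nonneg _) herr (hsum_c.mul_right _)
    have hsum_err : Summable (fun k => c k * (rho ξ k t - main k)) :=
      Summable.of_norm hsum_errn
    have hmain_eq : ∀ k, c k * main k
        = ((A:ℝ):ℂ) * (w k ^ ((1:ℂ)/2) * c k * Complex.exp ((k:ℂ)*Complex.I*(t:ℂ))) := by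
      intro k
      have hexp : Complex.exp (w k * (t:ℂ))
          = ((Real.exp (ξ*t) : ℝ):ℂ) * Complex.exp ((k:ℂ)*Complex.I*(t:ℂ)) := by
        rw [Complex.ofReal_exp, ← Complex.exp_add]
        congr 1
        rw [hwdef]
        push_cast
        ring
      rw [hmaindef]
      simp only []
      rw [hexp, hA]
      push_cast
      ring
    have hsum_main : Summable (fun k => c k * main k) :=
      (((hsum_S t).mul_left (((A:ℝ):ℂ))).congr (fun k => (hmain_eq k).symm))
    have hsplit : (∑' k : ℤ, c k * rho ξ k t)
        = ((A:ℝ):ℂ) * S t + ∑' k : ℤ, c k * (rho ξ k t - main k) := by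
      have h1 : ∀ k : ℤ, c k * rho ξ k t = c k * main k + c k * (rho ξ k t - main k) :=
        fun k => by ring
      rw [tsum_congr h1, Summable.tsum_add hsum_main hsum_err]
      congr 1
      rw [tsum_congr hmain_eq, tsum_mul_left]
    obtain ⟨him0, hre0⟩ := hpos t ht0
    rw [hsplit] at him0 hre0
    set E := ∑' k : ℤ, c k * (rho ξ k t - main k) with hEdef
    have hEb : ‖E‖ ≤ K * (10/Real.pi * Real.exp (ξ*t)) := by
      calc ‖E‖ ≤ ∑' k : ℤ, ‖c k * (rho ξ k t - main k)‖ := norm_tsum_le_tsum_norm hsum_errn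
        _ ≤ ∑' k : ℤ, ‖c k‖ * (10/Real.pi * Real.exp (ξ*t)) :=
            Summable.tsum_le_tsum herr hsum_errn (hsum_c.mul_right _)
        _ = K * (10/Real.pi * Real.exp (ξ*t)) := by rw [hK, tsum_mul_right]
    have harith : K * (10/Real.pi * Real.exp (ξ*t)) = B / Real.sqrt t * A := by
      rw [hB, hA]
      have hsπ : Real.sqrt Real.pi * Real.sqrt Real.pi = Real.pi := Real.mul_self_sqrt hπ.le
      have hsπ0 : Real.sqrt Real.pi ≠ 0 := by positivity
      have hst0 : Real.sqrt t ≠ 0 := hst.ne'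
      field_simp
      ring_nf
      linear_combination (K * 10) * hsπ
    have him : (((A:ℝ):ℂ) * S t + E).im = A * (S t).im + E.im := by
      simp [Complex.add_im, Complex.mul_im]
    have hre : (((A:ℝ):ℂ) * S t + E).re = A * (S t).re + E.re := by
      simp [Complex.add_re, Complex.mul_re]
    rw [him] at him0
    rw [hre] at hre0
    constructor
    · have h1 : A * (S t).im = -E.im := by linarith
      have h2 : |E.im| ≤ B / Real.sqrt t * A := le_trans (Complex.abs_im_le_norm E)
        (by linarith [hEb, harith])
      have h3 : A * |(S t).im| ≤ A * (B / Real.sqrt t) := by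
        rw [show A * |(S t).im| = |A * (S t).im| from by
          rw [abs_mul, _root_.abs_of_pos hA0]]
        rw [h1, abs_neg]
        linarith [h2]
      exact le_of_mul_le_mul_left h3 hA0
    · have h2 : |E.re| ≤ B / Real.sqrt t * A := le_trans (Complex.abs_re_le_norm E)
        (by linarith [hEb, harith])
      have h4 : E.re ≤ B / Real.sqrt t * A := (abs_le.mp h2).2
      have e0 : A * (-(B / Real.sqrt t)) = -(B / Real.sqrt t * A) := by ring
      have h5 : A * (-(B / Real.sqrt t)) ≤ A * (S t).re := by linarith
      exact le_of_mul_le_mul_left h5 hA0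
  -- limit transfer to all real t
  have hS : ∀ t : ℝ, (S t).im = 0 ∧ 0 ≤ (S t).re := by
    intro t
    have hkey : ∀ ε : ℝ, 0 < ε → |(S t).im| ≤ ε ∧ -ε ≤ (S t).re := by
      intro ε hε
      set M : ℝ := max 1 ((B/ε)^2) with hM
      obtain ⟨n, hn⟩ := exists_nat_ge (M - t)
      set t' : ℝ := t + 2*Real.pi*n with ht'
      have h2π : (1:ℝ) ≤ 2*Real.pi := by nlinarith [Real.pi_gt_three]
      have hnle : (n:ℝ) ≤ 2*Real.pi*(n:ℝ) := by nlinarith [(Nat.cast_nonneg n : (0:ℝ) ≤ (n:ℝ))]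
      have ht'M : M ≤ t' := by rw [ht']; push_cast; linarith
      have ht'1 : (1:ℝ) ≤ t' := le_trans (le_max_left _ _) ht'M
      have hst' : 0 < Real.sqrt t' := Real.sqrt_pos.mpr (by linarith)
      have hBε : B / Real.sqrt t' ≤ ε := by
        have hsq : (B/ε)^2 ≤ t' := le_trans (le_max_right _ _) ht'M
        have h1 : B/ε ≤ Real.sqrt t' := by
          calc B/ε = Real.sqrt ((B/ε)^2) := (Real.sqrt_sq (by positivity)).symm
            _ ≤ Real.sqrt t' := Real.sqrt_le_sqrt hsq
        rw [div_le_iff₀ hst']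
        have hBe : B = (B/ε)*ε := by field_simp
        have := mul_le_mul_of_nonneg_right h1 hε.le
        linarith
      have hm := hmainS t' ht'1
      have hmS : S t' = S t := by rw [ht']; exact hSper t n
      rw [hmS] at hm
      exact ⟨hm.1.trans hBε, by linarith [hm.2, neg_le_neg hBε]⟩
    constructor
    · have h1 : |(S t).im| ≤ 0 := by
        by_contra h
        push_neg at h
        have h2 := hkey (|(S t).im|/2) (by linarith)
        linarith [h2.1]
      exact abs_nonpos_iff.mp h1
    · by_contra h
      push_neg at h
      have h2 := hkey (-(S t).re/2) (by linarith)
      linarith [h2.2]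
  constructor
  · intro x
    exact hS x
  · intro hξ0 j hj
    subst hξ0
    have hw0 : w 0 = 0 := by rw [hwdef]; simp
    have hb0 : w 0 ^ ((1:ℂ)/2) * c 0 = 0 := by
      rw [hw0, Complex.zero_cpow (by norm_num : ((1:ℂ)/2) ≠ 0), zero_mul]
    have hcont_term : ∀ k : ℤ,
        Continuous (fun t : ℝ => w k ^ ((1:ℂ)/2) * c k * Complex.exp ((k:ℂ)*Complex.I*(t:ℂ))) := by
      intro k
      fun_prop
    have hScont : Continuous S := by
      rw [hSdef]
      apply continuous_tsum hcont_term hsum_b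
      intro k t
      exact le_of_eq (hcterm k t)
    have hexp1 : ∀ (m : ℤ) (t : ℝ), ‖Complex.exp ((m:ℂ)*Complex.I*(t:ℂ))‖ = 1 := by
      intro m t
      rw [Complex.norm_exp]
      have h2 : ((m:ℂ)*Complex.I*(t:ℂ)).re = 0 := by
        simp [Complex.mul_re, Complex.mul_im]
      rw [h2, Real.exp_zero]
    have h2π0 : (0:ℝ) ≤ 2*Real.pi := by positivity
    have hFour : ∀ j' : ℤ,
        (∫ t in (0:ℝ)..(2*Real.pi), S t * Complex.exp (-(j':ℂ)*Complex.I*(t:ℂ)))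
        = (w j' ^ ((1:ℂ)/2) * c j') * ((2*Real.pi : ℝ):ℂ) := by
      intro j'
      have hterm_eq : ∀ t : ℝ, S t * Complex.exp (-(j':ℂ)*Complex.I*(t:ℂ))
          = ∑' k : ℤ, (w k ^ ((1:ℂ)/2) * c k)
              * Complex.exp (((k - j' : ℤ):ℂ)*Complex.I*(t:ℂ)) := by
        intro t
        simp only [hSdef]
        rw [← tsum_mul_right]
        apply tsum_congr
        intro k
        rw [mul_assoc, ← Complex.exp_add]
        congr 2
        push_cast
        ring
      rw [intervalIntegral.integral_congr (fun t _ => hterm_eq t)]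
      rw [intervalIntegral.integral_of_le h2π0]
      have hmeas : ∀ k : ℤ, AEStronglyMeasurable
          (fun t : ℝ => (w k ^ ((1:ℂ)/2) * c k)
            * Complex.exp (((k - j' : ℤ):ℂ)*Complex.I*(t:ℂ)))
          (volume.restrict (Ioc (0:ℝ) (2*Real.pi))) := by
        intro k
        apply Continuous.aestronglyMeasurable
        fun_prop
      have hnn : ∀ k : ℤ, (∫⁻ t, ‖(w k ^ ((1:ℂ)/2) * c k)
            * Complex.exp (((k - j' : ℤ):ℂ)*Complex.I*(t:ℂ))‖₊
            ∂(volume.restrict (Ioc (0:ℝ) (2*Real.pi))))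
          = (‖w k ^ ((1:ℂ)/2) * c k‖₊ : ENNReal) * ENNReal.ofReal (2*Real.pi) := by
        intro k
        have h1 : ∀ t : ℝ, ‖(w k ^ ((1:ℂ)/2) * c k)
            * Complex.exp (((k - j' : ℤ):ℂ)*Complex.I*(t:ℂ))‖₊
            = ‖w k ^ ((1:ℂ)/2) * c k‖₊ := by
          intro t
          apply NNReal.coe_injective
          simp only [coe_nnnorm, norm_mul]
          rw [hexp1 (k - j') t, mul_one]
        simp_rw [h1]
        rw [MeasureTheory.lintegral_const, Measure.restrict_apply_univ, Real.volume_Ioc]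
        norm_num
      have hsumnn : Summable (fun k : ℤ => ‖w k ^ ((1:ℂ)/2) * c k‖₊) := by
        apply NNReal.summable_coe.mp
        simpa [coe_nnnorm] using hsum_b
      have hlint : (∑' k : ℤ, ∫⁻ t, ‖(w k ^ ((1:ℂ)/2) * c k)
            * Complex.exp (((k - j' : ℤ):ℂ)*Complex.I*(t:ℂ))‖₊
            ∂(volume.restrict (Ioc (0:ℝ) (2*Real.pi)))) ≠ ⊤ := by
        rw [tsum_congr hnn, ENNReal.tsum_mul_right]
        exact ENNReal.mul_ne_top (ENNReal.tsum_coe_ne_top_iff_summable.mpr hsumnn)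
          ENNReal.ofReal_ne_top
      rw [MeasureTheory.integral_tsum hmeas hlint]
      rw [tsum_eq_single j' ?_]
      · have he : ∀ t : ℝ, (w j' ^ ((1:ℂ)/2) * c j')
            * Complex.exp (((j' - j' : ℤ):ℂ)*Complex.I*(t:ℂ))
            = (w j' ^ ((1:ℂ)/2) * c j') := by
          intro t
          simp
        simp_rw [he]
        rw [MeasureTheory.setIntegral_const, measureReal_def, Real.volume_Ioc]
        rw [show (2*Real.pi - 0 : ℝ) = 2*Real.pi from by ring]
        rw [ENNReal.toReal_ofReal h2π0, Complex.real_smul, mul_comm]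
      · intro k hk
        rw [← intervalIntegral.integral_of_le h2π0]
        rw [intervalIntegral.integral_const_mul]
        have hc0 : ((k - j' : ℤ):ℂ)*Complex.I ≠ 0 := by
          apply mul_ne_zero _ Complex.I_ne_zero
          exact_mod_cast sub_ne_zero.mpr hk
        rw [integral_exp_mul_complex hc0]
        have e1 : ((k - j' : ℤ):ℂ)*Complex.I*((2*Real.pi:ℝ):ℂ)
            = ((k - j' : ℤ):ℂ)*(2*(Real.pi:ℝ)*Complex.I) := by
          push_cast
          ring
        rw [e1, Complex.exp_int_mul_two_pi_mul_I]
        simp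
    have hzero : (∫ t in (0:ℝ)..(2*Real.pi), S t) = 0 := by
      have h := hFour 0
      rw [hb0, zero_mul] at h
      rw [← h]
      apply intervalIntegral.integral_congr
      intro t _
      simp
    have hSreal : ∀ t : ℝ, S t = (((S t).re : ℝ):ℂ) := by
      intro t
      apply Complex.ext
      · simp
      · simp [(hS t).1]
    have hre_int : (∫ t in (0:ℝ)..(2*Real.pi), (S t).re) = 0 := by
      have hSint : IntervalIntegrable S volume 0 (2*Real.pi) :=
        hScont.intervalIntegrable 0 (2*Real.pi)
      have h := Complex.reCLM.intervalIntegral_comp_comm hSint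
      rw [hzero] at h
      simpa using h
    have hnorm0 : ‖(w j ^ ((1:ℂ)/2) * c j) * ((2*Real.pi:ℝ):ℂ)‖ ≤ 0 := by
      rw [← hFour j]
      calc ‖∫ t in (0:ℝ)..(2*Real.pi), S t * Complex.exp (-(j:ℂ)*Complex.I*(t:ℂ))‖
          ≤ ∫ t in (0:ℝ)..(2*Real.pi), ‖S t * Complex.exp (-(j:ℂ)*Complex.I*(t:ℂ))‖ :=
            intervalIntegral.norm_integral_le_integral_norm h2π0
        _ = ∫ t in (0:ℝ)..(2*Real.pi), (S t).re := by
            apply intervalIntegral.integral_congr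
            intro t _
            show ‖S t * Complex.exp (-(j:ℂ)*Complex.I*(t:ℂ))‖ = (S t).re
            rw [norm_mul]
            have h1 : ‖Complex.exp (-(j:ℂ)*Complex.I*(t:ℂ))‖ = 1 := by
              rw [show -(j:ℂ)*Complex.I*(t:ℂ) = ((-j:ℤ):ℂ)*Complex.I*(t:ℂ) from by
                push_cast; ring]
              exact hexp1 (-j) t
            rw [h1, mul_one, hSreal t, Complex.norm_real, Real.norm_eq_abs,
              _root_.abs_of_nonneg (hS t).2]
            simp
        _ = 0 := hre_int
    have hbj : w j ^ ((1:ℂ)/2) * c j = 0 := by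
      have h0 := norm_le_zero_iff.mp hnorm0
      rcases mul_eq_zero.mp h0 with h|h
      · exact h
      · exfalso
        have h2 : ((2*Real.pi:ℝ):ℂ) ≠ 0 := by
          exact_mod_cast (by positivity : (2*Real.pi:ℝ) ≠ 0)
        exact h2 h
    have hwj : w j ≠ 0 := by
      intro h
      apply hj
      have h3 : (w j).im = 0 := by rw [h]; simp
      rw [hwdef] at h3
      simp at h3
      exact_mod_cast h3
    rcases mul_eq_zero.mp hbj with h|h
    · exact absurd h (sqrt_ne_zero' hwj)
    · exact h
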